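/- For every f ∈ H¹₀((0,1)), define F(x) = ∫₀ˣ f(t)dt, F̂(x) = ∫₀ˣ F(t)dt, and u(x) = −F̂(x) + (3F̂(1) − F(1))x² + (F(1) − 2F̂(1))x³. Then u ∈ H³((0,1)) ∩ H²₀((0,1)) and −u''(x) + u''(0) + (u''(1) − u''(0))x = f(x) for all x ∈ (0,1). -/

import Mathlib

/-- Explicit solution formula for −u'' + u''(0) + (u''(1)−u''(0))x = f with
clamped boundary conditions, for f vanishing at the endpoints. -/
theorem stmt_14 (f : ℝ → ℝ) (hf : ContDiff ℝ 1 f) (hf0 : f 0 = 0) (hf1 : f 1 = 0)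
    (F Fhat u : ℝ → ℝ)
    (hF : ∀ x, F x = ∫ t in (0:ℝ)..x, f t)
    (hFhat : ∀ x, Fhat x = ∫ t in (0:ℝ)..x, F t)
    (hu : ∀ x, u x = -Fhat x + (3 * Fhat 1 - F 1) * x^2
      + (F 1 - 2 * Fhat 1) * x^3) :
    ContDiff ℝ 3 u ∧ u 0 = 0 ∧ deriv u 0 = 0 ∧ u 1 = 0 ∧ deriv u 1 = 0 ∧
    ∀ x ∈ Set.Ioo (0:ℝ) 1,
      -(iteratedDeriv 2 u x) + iteratedDeriv 2 u 0 +
        (iteratedDeriv 2 u 1 - iteratedDeriv 2 u 0) * x = f x := by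
  have hfc : Continuous f := hf.continuous
  set a := 3 * Fhat 1 - F 1 with ha
  set b := F 1 - 2 * Fhat 1 with hb
  have hF' : ∀ x, HasDerivAt F (f x) x := by
    intro x
    have := (hfc.integral_hasStrictDerivAt 0 x).hasDerivAt
    exact this.congr_of_eventuallyEq (Filter.Eventually.of_forall fun y => hF y)
  have hFdiff : Differentiable ℝ F := fun x => (hF' x).differentiableAt
  have hFderiv : deriv F = f := funext fun x => (hF' x).deriv
  have hFcd : ContDiff ℝ 2 F := by
    rw [show (2 : WithTop ℕ∞) = 1 + 1 from rfl, contDiff_succ_iff_deriv]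
    refine ⟨hFdiff, by simp, ?_⟩
    rw [hFderiv]; exact hf
  have hFc : Continuous F := hFdiff.continuous
  have hFhat' : ∀ x, HasDerivAt Fhat (F x) x := by
    intro x
    have := (hFc.integral_hasStrictDerivAt 0 x).hasDerivAt
    exact this.congr_of_eventuallyEq (Filter.Eventually.of_forall fun y => hFhat y)
  have hFhdiff : Differentiable ℝ Fhat := fun x => (hFhat' x).differentiableAt
  have hFhderiv : deriv Fhat = F := funext fun x => (hFhat' x).deriv
  have hFhcd : ContDiff ℝ 3 Fhat := by
    rw [show (3 : WithTop ℕ∞) = 2 + 1 from rfl, contDiff_succ_iff_deriv]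
    refine ⟨hFhdiff, by simp, ?_⟩
    rw [hFhderiv]; exact hFcd
  have hueq : u = fun x => -Fhat x + a * x^2 + b * x^3 := funext fun x => hu x
  have hu' : ∀ x, HasDerivAt u (-F x + a * (2*x) + b * (3*x^2)) x := by
    intro x
    rw [hueq]
    have h1 : HasDerivAt (fun x : ℝ => -Fhat x) (-F x) x := (hFhat' x).neg
    have h2 : HasDerivAt (fun x : ℝ => a * x^2) (a * (2*x)) x := by
      simpa using ((hasDerivAt_pow 2 x).const_mul a)
    have h3 : HasDerivAt (fun x : ℝ => b * x^3) (b * (3*x^2)) x := by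
      simpa using ((hasDerivAt_pow 3 x).const_mul b)
    exact (h1.add h2).add h3
  have hud : deriv u = fun x => -F x + a * (2*x) + b * (3*x^2) :=
    funext fun x => (hu' x).deriv
  have hu'' : ∀ x, HasDerivAt (deriv u) (-f x + a * 2 + b * (6*x)) x := by
    intro x
    rw [hud]
    have h1 : HasDerivAt (fun x : ℝ => -F x) (-f x) x := (hF' x).neg
    have h2 : HasDerivAt (fun x : ℝ => a * (2*x)) (a * 2) x := by
      simpa using ((hasDerivAt_id x).const_mul (2:ℝ)).const_mul a
    have h3 : HasDerivAt (fun x : ℝ => b * (3*x^2)) (b * (6*x)) x := by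
      have := ((hasDerivAt_pow 2 x).const_mul (3:ℝ)).const_mul b
      exact this.congr_deriv (by simp only [Nat.cast_ofNat, Nat.add_one_sub_one, pow_one]; ring)
    exact (h1.add h2).add h3
  have hit2 : ∀ x, iteratedDeriv 2 u x = -f x + a * 2 + b * (6*x) := by
    intro x
    rw [show (2:ℕ) = 1 + 1 from rfl, iteratedDeriv_succ, iteratedDeriv_one]
    exact (hu'' x).deriv
  have hF0 : F 0 = 0 := by rw [hF]; simp
  have hFh0 : Fhat 0 = 0 := by rw [hFhat]; simp
  refine ⟨?_, ?_, ?_, ?_, ?_, ?_⟩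
  · rw [hueq]
    exact (hFhcd.neg.add ((contDiff_const.mul (contDiff_id.pow 2)))).add
      (contDiff_const.mul (contDiff_id.pow 3))
  · rw [hu]; simp [hFh0]
  · rw [hud]; simp [hF0]
  · rw [hu]; ring
  · rw [hud]; simp; ring
  · intro x _
    rw [hit2, hit2, hit2, hf0, hf1]
    ring
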